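/- Let G be a connected graph, v a simplicial vertex of G with deg(v) ≥ 2, and e an edge incident to v. Then meg(G \ {e}) ≤ meg(G) + 1. -/

import Mathlib

open SimpleGraph

variable {V : Type*}

/-- A pair of vertices `u, v` monitors edge `e` in `G` if `u` and `v` are connected
and `e` lies on every shortest path (walk of length `G.dist u v`) between them. -/
def monitors (G : SimpleGraph V) (u v : V) (e : Sym2 V) : Prop :=
  G.Reachable u v ∧ ∀ p : G.Walk u v, p.length = G.dist u v → e ∈ p.edges

/-- `M` is a monitoring edge-geodetic set of `G`. -/
def IsMEGSet (G : SimpleGraph V) (M : Set V) : Prop :=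
  ∀ e ∈ G.edgeSet, ∃ u ∈ M, ∃ v ∈ M, monitors G u v e

/-- The monitoring edge-geodetic number: minimum size of an MEG-set. -/
noncomputable def meg (G : SimpleGraph V) : ℕ :=
  sInf {n | ∃ M : Finset V, IsMEGSet G ↑M ∧ M.card = n}

lemma monitors_symm {G : SimpleGraph V} {a b : V} {e : Sym2 V}
    (h : monitors G a b e) : monitors G b a e := by
  refine ⟨h.1.symm, fun p hp => ?_⟩
  have := h.2 p.reverse (by rw [Walk.length_reverse, hp, SimpleGraph.dist_comm])
  rwa [Walk.edges_reverse, List.mem_reverse] at this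

/-- a shortest walk between two vertices distinct from a simplicial vertex `v`
avoids `v`. -/
lemma shortest_avoids_simplicial (G : SimpleGraph V) {v : V}
    (hsimp : ∀ a ∈ G.neighborSet v, ∀ b ∈ G.neighborSet v, a ≠ b → G.Adj a b)
    {x y : V} (hx : x ≠ v) (hy : y ≠ v) (p : G.Walk x y) (hp : p.length = G.dist x y) :
    v ∉ p.support := by
  classical
  intro hv
  obtain ⟨b, hvb, r', hr'⟩ := (p.dropUntil v hv).exists_eq_cons_of_ne (Ne.symm hy)
  obtain ⟨a, hva, q₂, hq₂⟩ := (p.takeUntil v hv).reverse.exists_eq_cons_of_ne (Ne.symm hx)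
  have hlen : (p.takeUntil v hv).length + (p.dropUntil v hv).length = p.length := by
    rw [← Walk.length_append, p.take_spec hv]
  have h1 : (p.takeUntil v hv).length = q₂.length + 1 := by
    have := congrArg Walk.length hq₂
    rw [Walk.length_reverse] at this
    simpa using this
  have h2 : (p.dropUntil v hv).length = r'.length + 1 := by rw [hr']; simp
  by_cases hab : a = b
  · subst hab
    have hd := SimpleGraph.dist_le (q₂.reverse.append r')
    rw [Walk.length_append, Walk.length_reverse] at hd
    omega
  · have hadj := hsimp a hva b hvb hab
    have hd := SimpleGraph.dist_le (q₂.reverse.append (Walk.cons hadj r'))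
    rw [Walk.length_append, Walk.length_reverse, Walk.length_cons] at hd
    omega

lemma shortest_avoids_edge (G : SimpleGraph V) {v u : V}
    (hsimp : ∀ a ∈ G.neighborSet v, ∀ b ∈ G.neighborSet v, a ≠ b → G.Adj a b)
    {x y : V} (hx : x ≠ v) (hy : y ≠ v) (p : G.Walk x y) (hp : p.length = G.dist x y) :
    s(v, u) ∉ p.edges := fun he =>
  shortest_avoids_simplicial G hsimp hx hy p hp (p.fst_mem_support_of_mem_edges he)

lemma dist_deleteEdges (G : SimpleGraph V) (hconn : G.Connected) {v u : V}
    (hsimp : ∀ a ∈ G.neighborSet v, ∀ b ∈ G.neighborSet v, a ≠ b → G.Adj a b)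
    {x y : V} (hx : x ≠ v) (hy : y ≠ v) :
    (G.deleteEdges {s(v, u)}).Reachable x y ∧
      (G.deleteEdges {s(v, u)}).dist x y = G.dist x y := by
  obtain ⟨p, hp⟩ := hconn.exists_walk_length_eq_dist x y
  have hno : s(v, u) ∉ p.edges := shortest_avoids_edge G hsimp hx hy p hp
  have hsub : ∀ e ∈ p.edges, e ∈ (G.deleteEdges {s(v, u)}).edgeSet := by
    intro e hep
    rw [edgeSet_deleteEdges]
    exact ⟨p.edges_subset_edgeSet hep, fun h => hno (Set.mem_singleton_iff.mp h ▸ hep)⟩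
  let p' := p.transfer _ hsub
  refine ⟨p'.reachable, le_antisymm ?_ ?_⟩
  · have := SimpleGraph.dist_le p'
    rwa [Walk.length_transfer, hp] at this
  · obtain ⟨q, hq⟩ := (p'.reachable).exists_walk_length_eq_dist
    have hsub' : ∀ e ∈ q.edges, e ∈ G.edgeSet := by
      intro e he
      have := q.edges_subset_edgeSet he
      rw [edgeSet_deleteEdges] at this
      exact this.1
    have := SimpleGraph.dist_le (q.transfer G hsub')
    rwa [Walk.length_transfer, hq] at this

lemma key_lemma (G : SimpleGraph V) (hconn : G.Connected) {v u : V}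
    (hsimp : ∀ a ∈ G.neighborSet v, ∀ b ∈ G.neighborSet v, a ≠ b → G.Adj a b)
    (huv : G.Adj v u) {b : V} {e : Sym2 V} (hb : b ≠ v) (hne : e ≠ s(v, u))
    (hmon : monitors G v b e) :
    monitors (G.deleteEdges {s(v, u)}) v b e ∨ monitors (G.deleteEdges {s(v, u)}) u b e := by
  classical
  set G' := G.deleteEdges {s(v, u)} with hG'
  have hd0 : G.dist v b ≠ 0 :=
    SimpleGraph.dist_ne_zero_iff_ne_and_reachable.mpr ⟨Ne.symm hb, hconn v b⟩
  by_cases hex : ∃ p : G.Walk v b, p.length = G.dist v b ∧ s(v, u) ∉ p.edges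
  · left
    obtain ⟨p, hp, hpe⟩ := hex
    have hsub : ∀ e' ∈ p.edges, e' ∈ G'.edgeSet := by
      intro e' he'
      rw [hG', edgeSet_deleteEdges]
      exact ⟨p.edges_subset_edgeSet he', fun h => hpe (Set.mem_singleton_iff.mp h ▸ he')⟩
    let p' := p.transfer G' hsub
    have hdist' : G'.dist v b = G.dist v b := by
      refine le_antisymm ?_ ?_
      · have := SimpleGraph.dist_le p'
        rwa [Walk.length_transfer, hp] at this
      · obtain ⟨q, hq⟩ := (p'.reachable).exists_walk_length_eq_dist
        have hsub' : ∀ e' ∈ q.edges, e' ∈ G.edgeSet := by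
          intro e' he'
          have := q.edges_subset_edgeSet he'
          rw [hG', edgeSet_deleteEdges] at this
          exact this.1
        have := SimpleGraph.dist_le (q.transfer G hsub')
        rwa [Walk.length_transfer, hq] at this
    refine ⟨p'.reachable, fun q hq => ?_⟩
    have hsub' : ∀ e' ∈ q.edges, e' ∈ G.edgeSet := by
      intro e' he'
      have := q.edges_subset_edgeSet he'
      rw [hG', edgeSet_deleteEdges] at this
      exact this.1
    have := hmon.2 (q.transfer G hsub') (by rw [Walk.length_transfer, hq, hdist'])
    rwa [Walk.edges_transfer] at this
  · push_neg at hex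
    obtain ⟨p, hp⟩ := hconn.exists_walk_length_eq_dist v b
    obtain ⟨c, hvc, p₀, rfl⟩ := p.exists_eq_cons_of_ne (Ne.symm hb)
    rw [Walk.length_cons] at hp
    by_cases hbu : b = u
    · subst hbu
      exfalso
      have hd1 : G.dist v b = 1 := SimpleGraph.dist_eq_one_iff_adj.mpr huv
      have hp0 : p₀.length = 0 := by omega
      have hcb : c = b := Walk.eq_of_length_eq_zero hp0
      subst hcb
      have he := hmon.2 (Walk.cons hvc p₀) (by rw [Walk.length_cons]; omega)
      rw [Walk.edges_cons, List.mem_cons] at he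
      rcases he with hh | hh
      · exact hne (by rw [hh])
      · have : p₀.edges = [] := List.length_eq_zero_iff.mp (by rw [Walk.length_edges, hp0])
        rw [this] at hh
        exact (List.not_mem_nil hh)
    · have hcu : c = u := by
        by_contra hcu
        have hmem := hex (Walk.cons hvc p₀) (by rw [Walk.length_cons]; omega)
        rw [Walk.edges_cons, List.mem_cons] at hmem
        rcases hmem with hmem | hmem
        · rw [Sym2.eq_iff] at hmem
          rcases hmem with ⟨-, h2⟩ | ⟨h1, -⟩
          · exact hcu h2.symm
          · exact hvc.ne h1
        · -- s(v,u) ∈ p₀.edges, p₀ : Walk c b shortest, c ≠ v, b ≠ v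
          have hcb_le : G.dist c b ≤ p₀.length := SimpleGraph.dist_le p₀
          have hcb_ge : G.dist v b ≤ G.dist c b + 1 := by
            obtain ⟨w, hw⟩ := hconn.exists_walk_length_eq_dist c b
            have := SimpleGraph.dist_le (Walk.cons hvc w)
            rw [Walk.length_cons, hw] at this
            exact this
          have hc0 : p₀.length = G.dist c b := by omega
          exact shortest_avoids_edge G hsimp hvc.ne' hb p₀ hc0 hmem
      subst hcu
      right
      have hub_le : G.dist c b ≤ p₀.length := SimpleGraph.dist_le p₀
      have hub_ge : G.dist v b ≤ G.dist c b + 1 := by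
        obtain ⟨w, hw⟩ := hconn.exists_walk_length_eq_dist c b
        have := SimpleGraph.dist_le (Walk.cons huv w)
        rw [Walk.length_cons, hw] at this
        exact this
      have hub : G.dist c b = G.dist v b - 1 := by omega
      obtain ⟨hreach', hdist'⟩ := dist_deleteEdges G hconn hsimp (v := v) (u := c) huv.ne' hb
      refine ⟨hreach', fun q hq => ?_⟩
      have hsub' : ∀ e' ∈ q.edges, e' ∈ G.edgeSet := by
        intro e' he'
        have := q.edges_subset_edgeSet he'
        rw [hG', edgeSet_deleteEdges] at this
        exact this.1
      have hlen : (Walk.cons huv (q.transfer G hsub')).length = G.dist v b := by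
        rw [Walk.length_cons, Walk.length_transfer, hq, hdist', hub]
        omega
      have he := hmon.2 (Walk.cons huv (q.transfer G hsub')) hlen
      rw [Walk.edges_cons, List.mem_cons] at he
      rcases he with hh | hh
      · exact absurd (by rw [hh]) hne
      · rwa [Walk.edges_transfer] at hh

/-- Removing an edge incident to a simplicial vertex of degree at least `2`
increases `meg` by at most `1`. -/
theorem deleteEdge_simplicial_meg_le [Fintype V] (G : SimpleGraph V) [DecidableRel G.Adj]
    (hconn : G.Connected) (v : V)
    (hsimp : ∀ a ∈ G.neighborSet v, ∀ b ∈ G.neighborSet v, a ≠ b → G.Adj a b)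
    (hdeg : 2 ≤ G.degree v) (u : V) (huv : G.Adj v u) :
    meg (G.deleteEdges {s(v, u)}) ≤ meg G + 1 := by
  classical
  have hS : ∃ n, ∃ M : Finset V, IsMEGSet G ↑M ∧ M.card = n := by
    refine ⟨_, Finset.univ, ?_, rfl⟩
    intro e he
    revert he
    induction e using Sym2.ind with
    | _ x y =>
      intro he
      rw [mem_edgeSet] at he
      refine ⟨x, by simp, y, by simp, he.reachable, fun p hp => ?_⟩
      rw [show G.dist x y = 1 from SimpleGraph.dist_eq_one_iff_adj.mpr he] at hp
      cases p with
      | nil => simp at hp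
      | cons h q =>
        rw [Walk.length_cons] at hp
        have hq0 : q.length = 0 := by omega
        have hcy := Walk.eq_of_length_eq_zero hq0
        subst hcy
        rw [Walk.edges_cons]
        exact List.mem_cons_self
  obtain ⟨M, hM, hcard⟩ :=
    Nat.sInf_mem (s := {n | ∃ M : Finset V, IsMEGSet G ↑M ∧ M.card = n}) hS
  set G' := G.deleteEdges {s(v, u)} with hG'
  have hMEG' : IsMEGSet G' ↑(insert u M) := by
    intro e he
    have heG : e ∈ G.edgeSet ∧ e ∉ ({s(v, u)} : Set (Sym2 V)) := by
      rw [hG', edgeSet_deleteEdges] at he; exact he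
    have hne : e ≠ s(v, u) := fun h => heG.2 (Set.mem_singleton_iff.mpr h)
    obtain ⟨a, haM, b, hbM, hmon⟩ := hM e heG.1
    by_cases hav : a = v
    · by_cases hbv : b = v
      · exfalso
        rw [hav, hbv] at hmon
        have := hmon.2 Walk.nil (by simp [SimpleGraph.dist_self])
        simp at this
      · rw [hav] at hmon haM
        rcases key_lemma G hconn hsimp huv hbv hne hmon with h | h
        · exact ⟨v, by simp [haM], b, by simp [hbM], h⟩
        · exact ⟨u, by simp, b, by simp [hbM], h⟩
    · by_cases hbv : b = v
      · rw [hbv] at hmon hbM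
        rcases key_lemma G hconn hsimp huv hav hne (monitors_symm hmon) with h | h
        · exact ⟨v, by simp [hbM], a, by simp [haM], h⟩
        · exact ⟨u, by simp, a, by simp [haM], h⟩
      · obtain ⟨hreach', hdist'⟩ := dist_deleteEdges G hconn hsimp (u := u) hav hbv
        refine ⟨a, by simp [haM], b, by simp [hbM], hreach', fun q hq => ?_⟩
        have hsub' : ∀ e' ∈ q.edges, e' ∈ G.edgeSet := by
          intro e' he'
          have := q.edges_subset_edgeSet he'
          rw [hG', edgeSet_deleteEdges] at this
          exact this.1
        have := hmon.2 (q.transfer G hsub') (by rw [Walk.length_transfer, hq, hdist'])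
        rwa [Walk.edges_transfer] at this
  have hmem' : (insert u M).card ∈ {n | ∃ M : Finset V, IsMEGSet G' ↑M ∧ M.card = n} :=
    ⟨insert u M, hMEG', rfl⟩
  calc meg G' ≤ (insert u M).card := Nat.sInf_le hmem'
    _ ≤ M.card + 1 := Finset.card_insert_le _ _
    _ = meg G + 1 := by rw [hcard]; rfl
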